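/- If a formula φ(x) is (n+1)-inductive for some n ∈ ℕ, then φ(x) is <-inductive. -/

import Mathlib

open FirstOrder Language

/-! ### The language `L_OR = {0, 1, +, ×, <}` of ordered rings -/

/-- Function symbols of the language of ordered rings. -/
inductive LorFunc : ℕ → Type
  | zero : LorFunc 0
  | one : LorFunc 0
  | add : LorFunc 2
  | mul : LorFunc 2

/-- Relation symbols of the language of ordered rings: just `<`. -/
inductive LorRel : ℕ → Type
  | lt : LorRel 2

/-- The first-order language of ordered rings. -/
def Lor : Language := ⟨LorFunc, LorRel⟩

/-- The term `0`. -/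
def zeroT {α : Type} : Lor.Term α := Constants.term LorFunc.zero

/-- The term `1`. -/
def oneT {α : Type} : Lor.Term α := Constants.term LorFunc.one

/-- Addition of terms. -/
def addT {α : Type} (t u : Lor.Term α) : Lor.Term α := Functions.apply₂ LorFunc.add t u

/-- Multiplication of terms. -/
def mulT {α : Type} (t u : Lor.Term α) : Lor.Term α := Functions.apply₂ LorFunc.mul t u

/-- The term `2`, an abbreviation for `1 + 1`. -/
def twoT {α : Type} : Lor.Term α := addT oneT oneT

/-- The numeral `k`, i.e. the closed term `(⋯((0+1)+1)+⋯+1)` with `k` ones. -/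
def numT {α : Type} : ℕ → Lor.Term α
  | 0 => zeroT
  | n + 1 => addT (numT n) oneT

/-- The bounded formula `t < u`. -/
def ltBF {α : Type} {n : ℕ} (t u : Lor.Term (α ⊕ Fin n)) : Lor.BoundedFormula α n :=
  Relations.boundedFormula₂ LorRel.lt t u

/-- The formula `t < u`. -/
def ltFml {α : Type} (t u : Lor.Term α) : Lor.Formula α :=
  Relations.formula₂ LorRel.lt t u

/-- The formula `t ≤ u`, an abbreviation for `t < u ∨ t = u`. -/
def leFml {α : Type} (t u : Lor.Term α) : Lor.Formula α :=
  ltFml t u ⊔ Term.equal t u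

/-! ### The base theory `PA⁻` -/

/-- `PA⁻`, the theory of non-negative parts of discretely ordered rings. -/
def PAminus : Lor.Theory :=
  { -- (P1) associativity of +
    ∀' ∀' ∀' (addT (addT &0 &1) &2 =' addT &0 (addT &1 &2)),
    -- (P2) commutativity of +
    ∀' ∀' (addT &0 &1 =' addT &1 &0),
    -- (P3) associativity of ×
    ∀' ∀' ∀' (mulT (mulT &0 &1) &2 =' mulT &0 (mulT &1 &2)),
    -- (P4) commutativity of ×
    ∀' ∀' (mulT &0 &1 =' mulT &1 &0),
    -- (P5) distributivity
    ∀' ∀' ∀' (mulT &0 (addT &1 &2) =' addT (mulT &0 &1) (mulT &0 &2)),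
    -- (P6) x + 0 = x
    ∀' (addT &0 zeroT =' &0),
    -- (P7) x × 0 = 0
    ∀' (mulT &0 zeroT =' zeroT),
    -- (P8) x × 1 = x
    ∀' (mulT &0 oneT =' &0),
    -- (P9) transitivity of <
    ∀' ∀' ∀' (ltBF &0 &1 ⊓ ltBF &1 &2 ⟹ ltBF &0 &2),
    -- (P10) irreflexivity of <
    ∀' ∼(ltBF &0 &0),
    -- (P11) linearity of <
    ∀' ∀' (ltBF &0 &1 ⊔ &0 =' &1 ⊔ ltBF &1 &0),
    -- (P12) x < y → x + z < y + z
    ∀' ∀' ∀' (ltBF &0 &1 ⟹ ltBF (addT &0 &2) (addT &1 &2)),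
    -- (P13) z ≠ 0 ∧ x < y → x × z < y × z
    ∀' ∀' ∀' (∼(&2 =' zeroT) ⊓ ltBF &0 &1 ⟹ ltBF (mulT &0 &2) (mulT &1 &2)),
    -- (P14) x < y ↔ ∃z ((x + z) + 1 = y)
    ∀' ∀' (ltBF &0 &1 ⇔ ∃' (addT (addT &0 &2) oneT =' &1)),
    -- (P15) 0 < 1 ∧ (x > 0 → x ≥ 1)
    ltBF zeroT oneT ⊓ ∀' (ltBF zeroT &0 ⟹ ltBF oneT &0 ⊔ oneT =' &0),
    -- (P16) x ≥ 0
    ∀' (ltBF zeroT &0 ⊔ zeroT =' &0) }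

/-! ### Formulas `θ(x, z̄)` with a distinguished variable `x` and parameters `z̄`

A formula `θ(x, z̄)` with `m` parameters `z̄` and a distinguished induction
variable `x` is represented as `θ : Lor.Formula (Fin m ⊕ Fin 1)`, where the
`Fin m` component gives the parameters and the `Fin 1` component gives `x`. -/

/-- The distinguished variable `x` as a term. -/
def xT {m : ℕ} : Lor.Term (Fin m ⊕ Fin 1) := Term.var (Sum.inr 0)

/-- `θ(t, z̄)`, where `t` is a term possibly involving `x` and the parameters. -/
def substX {m : ℕ} (θ : Lor.Formula (Fin m ⊕ Fin 1)) (t : Lor.Term (Fin m ⊕ Fin 1)) :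
    Lor.Formula (Fin m ⊕ Fin 1) :=
  θ.subst (Sum.elim (fun i => Term.var (Sum.inl i)) fun _ => t)

/-- `θ(t, z̄)` where `t` is a term in the parameters only. -/
def substP {m : ℕ} (θ : Lor.Formula (Fin m ⊕ Fin 1)) (t : Lor.Term (Fin m)) :
    Lor.Formula (Fin m) :=
  θ.subst (Sum.elim (fun i => Term.var i) fun _ => t)

/-- `∀x θ(x, z̄)`. -/
noncomputable def allX {m : ℕ} (θ : Lor.Formula (Fin m ⊕ Fin 1)) : Lor.Formula (Fin m) :=
  Formula.iAlls (Fin 1) θ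

/-- The universal closure of a formula, as a sentence. -/
noncomputable def closeAll {α : Type} [Finite α] (φ : Lor.Formula α) : Lor.Sentence :=
  Formula.iAlls α (φ.relabel (Sum.inr : α → Empty ⊕ α))

/-- `∀x' < x, θ(x', z̄)`, a formula with free variable `x` (and parameters). -/
noncomputable def allLtX {m : ℕ} (θ : Lor.Formula (Fin m ⊕ Fin 1)) :
    Lor.Formula (Fin m ⊕ Fin 1) :=
  Formula.iAlls (Fin 1)
    (ltFml (Term.var (Sum.inr 0)) (Term.var (Sum.inl (Sum.inr 0))) ⟹
      θ.relabel (Sum.elim (fun i => Sum.inl (Sum.inl i)) fun _ => Sum.inr 0))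

/-- `∀x' ≤ x, θ(x', z̄)`, a formula with free variable `x` (and parameters). -/
noncomputable def allLeX {m : ℕ} (θ : Lor.Formula (Fin m ⊕ Fin 1)) :
    Lor.Formula (Fin m ⊕ Fin 1) :=
  Formula.iAlls (Fin 1)
    (leFml (Term.var (Sum.inr 0)) (Term.var (Sum.inl (Sum.inr 0))) ⟹
      θ.relabel (Sum.elim (fun i => Sum.inl (Sum.inl i)) fun _ => Sum.inr 0))

/-- The conjunction `⋀_{k<j} θ(k, z̄)`. -/
def conjNum {m : ℕ} (θ : Lor.Formula (Fin m ⊕ Fin 1)) : ℕ → Lor.Formula (Fin m)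
  | 0 => ⊤
  | j + 1 => conjNum θ j ⊓ substP θ (numT j)

/-- The conjunction `⋀_{k<j} θ(x+k, z̄)`. -/
def conjShift {m : ℕ} (θ : Lor.Formula (Fin m ⊕ Fin 1)) : ℕ → Lor.Formula (Fin m ⊕ Fin 1)
  | 0 => ⊤
  | j + 1 => conjShift θ j ⊓ substX θ (addT xT (numT j))

/-! ### Induction axioms -/

/-- The induction axiom `I_x θ`:
`∀z̄( θ(0,z̄) ∧ ∀x(θ(x,z̄) → θ(x+1,z̄)) → ∀x θ(x,z̄) )`. -/
noncomputable def indAx {m : ℕ} (θ : Lor.Formula (Fin m ⊕ Fin 1)) : Lor.Sentence :=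
  closeAll ((substP θ zeroT ⊓ allX (θ ⟹ substX θ (addT xT oneT))) ⟹ allX θ)

/-- The `<`-induction axiom `I^<_x θ`:
`∀z̄( ∀y(∀x<y θ(x,z̄) → θ(y,z̄)) → ∀x θ(x,z̄) )`. -/
noncomputable def indLtAx {m : ℕ} (θ : Lor.Formula (Fin m ⊕ Fin 1)) : Lor.Sentence :=
  closeAll (allX (allLtX θ ⟹ θ) ⟹ allX θ)

/-- The `(n+1)`-step induction axiom `I^{(n+1)-step}_x θ`:
`∀z̄( ⋀_{k<n+1} θ(k,z̄) ∧ ∀x(θ(x,z̄) → θ(x+n+1,z̄)) → ∀x θ(x,z̄) )`. -/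
noncomputable def indStepAx {m : ℕ} (n : ℕ) (θ : Lor.Formula (Fin m ⊕ Fin 1)) : Lor.Sentence :=
  closeAll ((conjNum θ (n + 1) ⊓ allX (θ ⟹ substX θ (addT xT (numT (n + 1))))) ⟹ allX θ)

/-- The `(n+1)`-induction axiom `I^{n+1}_x θ`:
`∀z̄( ⋀_{k<n+1} θ(k,z̄) ∧ ∀x(⋀_{k<n+1} θ(x+k,z̄) → θ(x+n+1,z̄)) → ∀x θ(x,z̄) )`. -/
noncomputable def indKAx {m : ℕ} (n : ℕ) (θ : Lor.Formula (Fin m ⊕ Fin 1)) : Lor.Sentence :=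
  closeAll ((conjNum θ (n + 1) ⊓ allX (conjShift θ (n + 1) ⟹ substX θ (addT xT (numT (n + 1))))) ⟹
    allX θ)

/-- The polynomial induction axiom `I^p_x θ`:
`∀z̄( θ(0,z̄) ∧ ∀x(θ(x,z̄) → θ(2x,z̄) ∧ θ(2x+1,z̄)) → ∀x θ(x,z̄) )`, where `2x` is `(1+1)×x`. -/
noncomputable def indPAx {m : ℕ} (θ : Lor.Formula (Fin m ⊕ Fin 1)) : Lor.Sentence :=
  closeAll ((substP θ zeroT ⊓
      allX (θ ⟹ substX θ (mulT twoT xT) ⊓ substX θ (addT (mulT twoT xT) oneT))) ⟹ allX θ)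

/-! ### Theories -/

/-- Peano arithmetic: `PA⁻` plus induction for all `L_OR` formulas. -/
noncomputable def PA : Lor.Theory :=
  PAminus ∪ {σ | ∃ (m : ℕ) (θ : Lor.Formula (Fin m ⊕ Fin 1)), σ = indAx θ}

/-- `IOpen`: `PA⁻` plus induction for all quantifier-free `L_OR` formulas. -/
noncomputable def IOpen : Lor.Theory :=
  PAminus ∪ {σ | ∃ (m : ℕ) (θ : Lor.Formula (Fin m ⊕ Fin 1)), θ.IsQF ∧ σ = indAx θ}

/-! ### Notions of inductiveness

A formula `φ(x)` with exactly one free variable `x` is represented as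
`φ : Lor.Formula (Fin 0 ⊕ Fin 1)` (no parameters). -/

/-- Formulas `φ(x)` with exactly one free variable `x`. -/
abbrev OneVarFormula : Type := Lor.Formula (Fin 0 ⊕ Fin 1)

/-- The sentence `∀x φ(x)`. -/
noncomputable def allS (φ : OneVarFormula) : Lor.Sentence := closeAll (allX φ)

/-- `φ(x)` is inductive: `PA⁻ ⊢ φ(0)` and `PA⁻ ⊢ ∀x(φ(x) → φ(x+1))`. -/
noncomputable def IsInductive (φ : OneVarFormula) : Prop :=
  PAminus ⊨ᵇ closeAll (substP φ zeroT) ∧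
    PAminus ⊨ᵇ closeAll (allX (φ ⟹ substX φ (addT xT oneT)))

/-- `φ(x)` is `<`-inductive: `PA⁻ ⊢ ∀y(∀x<y φ(x) → φ(y))`. -/
noncomputable def IsLtInductive (φ : OneVarFormula) : Prop :=
  PAminus ⊨ᵇ closeAll (allX (allLtX φ ⟹ φ))

/-- `φ(x)` is `(n+1)`-step inductive:
`PA⁻ ⊢ ⋀_{k<n+1} φ(k) ∧ ∀x(φ(x) → φ(x+n+1))`. -/
noncomputable def IsStepInductive (n : ℕ) (φ : OneVarFormula) : Prop :=
  PAminus ⊨ᵇ closeAll (conjNum φ (n + 1) ⊓ allX (φ ⟹ substX φ (addT xT (numT (n + 1)))))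

/-- `φ(x)` is `(n+1)`-inductive:
`PA⁻ ⊢ ⋀_{k<n+1} φ(k) ∧ ∀x(⋀_{k<n+1} φ(x+k) → φ(x+n+1))`. -/
noncomputable def IsKInductive (n : ℕ) (φ : OneVarFormula) : Prop :=
  PAminus ⊨ᵇ
    closeAll (conjNum φ (n + 1) ⊓ allX (conjShift φ (n + 1) ⟹ substX φ (addT xT (numT (n + 1)))))

/-- `φ(x)` is p-inductive (polynomially inductive):
`PA⁻ ⊢ φ(0) ∧ ∀x(φ(x) → φ(2x) ∧ φ(2x+1))`. -/
noncomputable def IsPInductive (φ : OneVarFormula) : Prop :=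
  PAminus ⊨ᵇ closeAll (substP φ zeroT ⊓
    allX (φ ⟹ substX φ (mulT twoT xT) ⊓ substX φ (addT (mulT twoT xT) oneT)))

/-! ### Cuts -/

/-- `φ(x)` is a cut: an inductive formula with `PA⁻ ⊢ ∀x∀y(x<y ∧ φ(y) → φ(x))`. -/
noncomputable def IsCut (φ : OneVarFormula) : Prop :=
  IsInductive φ ∧
    PAminus ⊨ᵇ closeAll
      (ltFml (Term.var (Sum.inr 0) : Lor.Term (Fin 0 ⊕ Fin 2)) (Term.var (Sum.inr 1)) ⊓
          φ.relabel (Sum.elim (fun i => Sum.inl i) fun _ => Sum.inr 1) ⟹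
        φ.relabel (Sum.elim (fun i => Sum.inl i) fun _ => Sum.inr 0))

/-- `φ(x)` is an a-cut: a cut with `PA⁻ ⊢ ∀x(φ(x) → φ(x+x))`. -/
noncomputable def IsACut (φ : OneVarFormula) : Prop :=
  IsCut φ ∧ PAminus ⊨ᵇ closeAll (allX (φ ⟹ substX φ (addT xT xT)))

/-- `φ(x)` is an am-cut: an a-cut with `PA⁻ ⊢ ∀x(φ(x) → φ(x×x))`. -/
noncomputable def IsAMCut (φ : OneVarFormula) : Prop :=
  IsACut φ ∧ PAminus ⊨ᵇ closeAll (allX (φ ⟹ substX φ (mulT xT xT)))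

section ModelFacts
open FirstOrder Language Structure

variable {M : Type} [Lor.Structure M]

def addM (a b : M) : M := funMap (L := Lor) LorFunc.add ![a, b]
def ltM (a b : M) : Prop := RelMap (L := Lor) LorRel.lt ![a, b]
def zM : M := Term.realize (fun i : Empty => i.elim) (zeroT (α := Empty))
def oM : M := Term.realize (fun i : Empty => i.elim) (oneT (α := Empty))

/-- interpretation of numerals -/
def numM : ℕ → M
  | 0 => zM
  | k + 1 => addM (numM k) oM

@[simp] lemma realize_zeroT {α : Type} (v : α → M) : Term.realize v zeroT = zM := by
  exact Term.realize_constants.trans Term.realize_constants.symm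

@[simp] lemma realize_oneT {α : Type} (v : α → M) : Term.realize v oneT = oM := by
  exact Term.realize_constants.trans Term.realize_constants.symm

@[simp] lemma realize_addT {α : Type} (v : α → M) (t u : Lor.Term α) :
    Term.realize v (addT t u) = addM (Term.realize v t) (Term.realize v u) := by
  exact Term.realize_functions_apply₂

@[simp] lemma realize_ltBF {α : Type} {n : ℕ} (t u : Lor.Term (α ⊕ Fin n)) (v : α → M)
    (xs : Fin n → M) : (ltBF t u).Realize v xs ↔
      ltM (t.realize (Sum.elim v xs)) (u.realize (Sum.elim v xs)) := by
  unfold ltBF ltM; exact BoundedFormula.realize_rel₂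

lemma realize_ltFml {α : Type} (t u : Lor.Term α) (v : α → M) :
    (ltFml t u).Realize v ↔ ltM (t.realize v) (u.realize v) := by
  unfold ltFml ltM; exact Formula.realize_rel₂

@[simp] lemma realize_numT {α : Type} (v : α → M) (k : ℕ) :
    Term.realize v (numT k) = numM k := by
  induction k with
  | zero => simp [numT, numM]
  | succ k ih => simp [numT, numM, ih]

set_option linter.unusedSectionVars false
variable [M ⊨ PAminus]

lemma addM_assoc (a b c : M) : addM (addM a b) c = addM a (addM b c) := by
  have := Theory.realize_sentence_of_mem (M := M) PAminus
    (show (∀' ∀' ∀' (addT (addT &0 &1) &2 =' addT &0 (addT &1 &2)) : Lor.Sentence) ∈ PAminus by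
      unfold PAminus; simp)
  simp only [Sentence.Realize, Formula.Realize, BoundedFormula.realize_all,
    BoundedFormula.realize_bdEqual, realize_addT] at this
  simpa [Fin.snoc, Term.realize] using this a b c

lemma addM_comm (a b : M) : addM a b = addM b a := by
  have := Theory.realize_sentence_of_mem (M := M) PAminus
    (show (∀' ∀' (addT &0 &1 =' addT &1 &0) : Lor.Sentence) ∈ PAminus by
      unfold PAminus; simp)
  simp only [Sentence.Realize, Formula.Realize, BoundedFormula.realize_all,
    BoundedFormula.realize_bdEqual, realize_addT] at this
  simpa [Fin.snoc, Term.realize] using this a b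

lemma addM_zero (a : M) : addM a zM = a := by
  have := Theory.realize_sentence_of_mem (M := M) PAminus
    (show (∀' (addT &0 zeroT =' &0) : Lor.Sentence) ∈ PAminus by
      unfold PAminus; simp)
  simp only [Sentence.Realize, Formula.Realize, BoundedFormula.realize_all,
    BoundedFormula.realize_bdEqual, realize_addT, realize_zeroT] at this
  simpa [Fin.snoc, Term.realize] using this a

lemma ltM_trans {a b c : M} (h1 : ltM a b) (h2 : ltM b c) : ltM a c := by
  have := Theory.realize_sentence_of_mem (M := M) PAminus
    (show (∀' ∀' ∀' (ltBF &0 &1 ⊓ ltBF &1 &2 ⟹ ltBF &0 &2) : Lor.Sentence) ∈ PAminus by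
      unfold PAminus; simp)
  simp only [Sentence.Realize, Formula.Realize, BoundedFormula.realize_all,
    BoundedFormula.realize_imp, BoundedFormula.realize_inf, realize_ltBF] at this
  have h := this a b c
  simp only [Fin.snoc, Term.realize, Function.comp_apply] at h
  exact h ⟨h1, h2⟩

lemma ltM_irrefl (a : M) : ¬ ltM a a := by
  have := Theory.realize_sentence_of_mem (M := M) PAminus
    (show (∀' ∼(ltBF &0 &0) : Lor.Sentence) ∈ PAminus by
      unfold PAminus; simp)
  simp only [Sentence.Realize, Formula.Realize, BoundedFormula.realize_all,
    BoundedFormula.realize_not, realize_ltBF] at this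
  have h := this a
  simpa [Fin.snoc, Term.realize, ltM] using h

lemma ltM_linear (a b : M) : ltM a b ∨ a = b ∨ ltM b a := by
  have := Theory.realize_sentence_of_mem (M := M) PAminus
    (show (∀' ∀' (ltBF &0 &1 ⊔ &0 =' &1 ⊔ ltBF &1 &0) : Lor.Sentence) ∈ PAminus by
      unfold PAminus; simp)
  simp only [Sentence.Realize, Formula.Realize, BoundedFormula.realize_all,
    BoundedFormula.realize_sup, BoundedFormula.realize_bdEqual, realize_ltBF] at this
  have h := this a b
  simp only [Fin.snoc, Term.realize, Function.comp_apply] at h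
  tauto

lemma ltM_add_right {a b : M} (c : M) (h : ltM a b) : ltM (addM a c) (addM b c) := by
  have := Theory.realize_sentence_of_mem (M := M) PAminus
    (show (∀' ∀' ∀' (ltBF &0 &1 ⟹ ltBF (addT &0 &2) (addT &1 &2)) : Lor.Sentence) ∈ PAminus by
      unfold PAminus; simp)
  simp only [Sentence.Realize, Formula.Realize, BoundedFormula.realize_all,
    BoundedFormula.realize_imp, realize_ltBF, realize_addT] at this
  have h' := this a b c
  simp only [Fin.snoc, Term.realize, Function.comp_apply] at h'
  exact h' h

lemma ltM_iff_exists (a b : M) : ltM a b ↔ ∃ z : M, addM (addM a z) oM = b := by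
  have := Theory.realize_sentence_of_mem (M := M) PAminus
    (show (∀' ∀' (ltBF &0 &1 ⇔ ∃' (addT (addT &0 &2) oneT =' &1)) : Lor.Sentence) ∈ PAminus by
      unfold PAminus; simp)
  simp only [Sentence.Realize, Formula.Realize, BoundedFormula.realize_all,
    BoundedFormula.realize_iff, BoundedFormula.realize_ex, realize_ltBF,
    BoundedFormula.realize_bdEqual, realize_addT,
    realize_oneT] at this
  have h := this a b
  simpa [Fin.snoc, Term.realize] using h

lemma zM_lt_oM : ltM (zM : M) oM := by
  have := Theory.realize_sentence_of_mem (M := M) PAminus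
    (show (ltBF zeroT oneT ⊓ ∀' (ltBF zeroT &0 ⟹ ltBF oneT &0 ⊔ oneT =' &0) : Lor.Sentence)
        ∈ PAminus by unfold PAminus; simp)
  simp only [Sentence.Realize, Formula.Realize, BoundedFormula.realize_inf,
    BoundedFormula.realize_all, BoundedFormula.realize_imp, BoundedFormula.realize_sup,
    BoundedFormula.realize_bdEqual, realize_ltBF, realize_zeroT,
    realize_oneT] at this
  exact this.1

lemma zM_le (a : M) : ltM zM a ∨ zM = a := by
  have := Theory.realize_sentence_of_mem (M := M) PAminus
    (show (∀' (ltBF zeroT &0 ⊔ zeroT =' &0) : Lor.Sentence) ∈ PAminus by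
      unfold PAminus; simp)
  simp only [Sentence.Realize, Formula.Realize, BoundedFormula.realize_all,
    BoundedFormula.realize_sup, BoundedFormula.realize_bdEqual, realize_ltBF,
    realize_zeroT] at this
  have h := this a
  simpa [Fin.snoc, Term.realize] using h

end ModelFacts
section Derived
open FirstOrder Language Structure
variable {M : Type} [Lor.Structure M] [M ⊨ PAminus]

lemma zero_addM (a : M) : addM zM a = a := by rw [addM_comm]; exact addM_zero a

lemma ltM_succ_self (a : M) : ltM a (addM a oM) := by
  rw [ltM_iff_exists]
  exact ⟨zM, by rw [addM_zero]⟩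

lemma ltM_add_left {a b : M} (c : M) (h : ltM a b) : ltM (addM c a) (addM c b) := by
  rw [addM_comm c a, addM_comm c b]; exact ltM_add_right c h

lemma not_ltM_zero (a : M) : ¬ ltM a zM := by
  intro h
  rcases zM_le a with h' | h'
  · exact ltM_irrefl a (ltM_trans h h')
  · rw [← h'] at h; exact ltM_irrefl zM h

lemma numM_lt_succ (k : ℕ) : ltM (numM k : M) (numM (k + 1)) := ltM_succ_self _

lemma numM_lt_numM {j k : ℕ} (h : j < k) : ltM (numM j : M) (numM k) := by
  induction k with
  | zero => omega
  | succ k ih =>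
    rcases Nat.lt_succ_iff_lt_or_eq.1 h with h' | h'
    · exact ltM_trans (ih h') (numM_lt_succ k)
    · subst h'; exact numM_lt_succ j

/-- below a numeral, everything is a numeral -/
lemma lt_numM_cases : ∀ (k : ℕ) (y : M), ltM y (numM k) → ∃ j, j < k ∧ y = numM j := by
  intro k
  induction k with
  | zero => intro y h; exact absurd h (not_ltM_zero y)
  | succ k ih =>
    intro y h
    rcases ltM_linear y (numM k) with h1 | h1 | h1
    · obtain ⟨j, hj, rfl⟩ := ih y h1
      exact ⟨j, by omega, rfl⟩
    · exact ⟨k, by omega, h1⟩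
    · -- numM k < y < numM k + 1 : contradiction
      exfalso
      obtain ⟨z, hz⟩ := (ltM_iff_exists (numM k) y).1 h1
      rcases zM_le z with hz0 | hz0
      · -- 0 < z, so numM (k+1) < y
        have h2 : ltM (addM (numM k) zM) (addM (numM k) z) := ltM_add_left _ hz0
        rw [addM_zero] at h2
        have h3 : ltM (addM (numM k) oM) (addM (addM (numM k) z) oM) := ltM_add_right _ h2
        rw [hz] at h3
        have h' : ltM y (addM (numM k) oM) := h
        exact ltM_irrefl y (ltM_trans h' h3)
      · rw [← hz0, addM_zero] at hz
        rw [← hz] at h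
        exact ltM_irrefl (addM (numM k) oM) h

/-- every element is a small numeral or of the form z + (n+1) -/
lemma decompose (n : ℕ) (y : M) :
    (∃ j, j < n + 1 ∧ y = numM j) ∨ ∃ z : M, y = addM z (numM (n + 1)) := by
  rcases ltM_linear y (numM (n + 1)) with h | h | h
  · exact Or.inl (lt_numM_cases _ y h)
  · exact Or.inr ⟨zM, by rw [zero_addM, h]⟩
  · obtain ⟨z, hz⟩ := (ltM_iff_exists (numM (n + 1)) y).1 h
    refine Or.inr ⟨addM z oM, ?_⟩
    rw [← hz, addM_comm (numM (n+1)) z, addM_assoc, addM_comm (numM (n+1)) oM,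
      ← addM_assoc]

end Derived
section Semantics
open FirstOrder Language Structure
variable {M : Type} [Lor.Structure M]

/-- valuation sending the variable x to `a` -/
def val1 (a : M) : Fin 0 ⊕ Fin 1 → M := Sum.elim Fin.elim0 (fun _ => a)

/-- the predicate defined by `φ` -/
def PM (φ : OneVarFormula) (a : M) : Prop := φ.Realize (val1 a)

lemma val1_eq (v : Fin 0 ⊕ Fin 1 → M) : v = val1 (v (Sum.inr 0)) := by
  funext p
  rcases p with i | j
  · exact i.elim0
  · rw [Subsingleton.elim j 0]; rfl

lemma realize_xT (v : Fin 0 ⊕ Fin 1 → M) : Term.realize v (xT (m := 0)) = v (Sum.inr 0) := rfl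

lemma realize_substX (φ : OneVarFormula) (t : Lor.Term (Fin 0 ⊕ Fin 1))
    (v : Fin 0 ⊕ Fin 1 → M) :
    (substX φ t).Realize v ↔ PM φ (t.realize v) := by
  have key : (fun a => Term.realize v
      (Sum.elim (fun i : Fin 0 => Term.var (Sum.inl i)) (fun _ : Fin 1 => t) a))
      = val1 (t.realize v) := by
    funext p
    rcases p with i | j
    · exact i.elim0
    · rfl
  rw [substX, PM, Formula.Realize, Formula.Realize, BoundedFormula.realize_subst, key]

lemma realize_substP (φ : OneVarFormula) (t : Lor.Term (Fin 0))
    (v : Fin 0 → M) :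
    (substP φ t).Realize v ↔ PM φ (t.realize v) := by
  have key : (fun a => Term.realize v
      (Sum.elim (fun i : Fin 0 => Term.var i) (fun _ : Fin 1 => t) a))
      = val1 (t.realize v) := by
    funext p
    rcases p with i | j
    · exact i.elim0
    · rfl
  rw [substP, PM, Formula.Realize, Formula.Realize, BoundedFormula.realize_subst, key]

lemma realize_allX (θ : Lor.Formula (Fin 0 ⊕ Fin 1)) (v : Fin 0 → M) :
    (allX θ).Realize v ↔ ∀ a : M, θ.Realize (val1 a) := by
  rw [allX, Formula.realize_iAlls]
  have key : ∀ (i : Fin 1 → M), (fun p => Sum.elim v i p) = val1 (i 0) := by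
    intro i
    funext p
    rcases p with i' | j
    · exact i'.elim0
    · rw [Subsingleton.elim j 0]; rfl
  constructor
  · intro h a
    have := h (fun _ => a)
    rwa [key] at this
  · intro h i
    rw [key]
    exact h (i 0)

lemma realize_closeAll (ψ : Lor.Formula (Fin 0)) (v : Empty → M) :
    Formula.Realize (closeAll ψ) v ↔ ∀ i : Fin 0 → M, ψ.Realize i := by
  unfold closeAll
  rw [Formula.realize_iAlls]
  constructor
  · intro h i
    exact (Formula.realize_relabel (g := (Sum.inr : Fin 0 → Empty ⊕ Fin 0))).1 (h i)
  · intro h i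
    exact (Formula.realize_relabel (g := (Sum.inr : Fin 0 → Empty ⊕ Fin 0))).2 (h i)

lemma realize_allLtX (φ : OneVarFormula) (v : Fin 0 ⊕ Fin 1 → M) :
    (allLtX φ).Realize v ↔ ∀ b : M, ltM b (v (Sum.inr 0)) → PM φ b := by
  rw [allLtX, Formula.realize_iAlls]
  have key : ∀ (i : Fin 1 → M),
      ((fun p => Sum.elim v i p) ∘
        (Sum.elim (fun i : Fin 0 => Sum.inl (Sum.inl i)) (fun _ : Fin 1 => Sum.inr 0)))
      = val1 (i 0) := by
    intro i
    funext p
    rcases p with i' | j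
    · exact i'.elim0
    · rw [Subsingleton.elim j 0]; rfl
  constructor
  · intro h b hb
    have := h (fun _ => b)
    rw [Formula.realize_imp, Formula.realize_relabel, key] at this
    apply this
    rw [realize_ltFml]
    exact hb
  · intro h i
    rw [Formula.realize_imp, Formula.realize_relabel, key]
    intro hlt
    rw [realize_ltFml] at hlt
    exact h (i 0) hlt

lemma realize_conjNum (φ : OneVarFormula) (j : ℕ) (v : Fin 0 → M) :
    (conjNum φ j).Realize v ↔ ∀ k, k < j → PM φ (numM k : M) := by
  induction j with
  | zero => simp [conjNum]
  | succ j ih =>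
    rw [conjNum, Formula.realize_inf, ih, realize_substP, realize_numT]
    constructor
    · rintro ⟨h1, h2⟩ k hk
      rcases Nat.lt_succ_iff_lt_or_eq.1 hk with h | h
      · exact h1 k h
      · subst h; exact h2
    · intro h
      exact ⟨fun k hk => h k (by omega), h j (by omega)⟩

lemma realize_conjShift (φ : OneVarFormula) (j : ℕ) (v : Fin 0 ⊕ Fin 1 → M) :
    (conjShift φ j).Realize v ↔ ∀ k, k < j → PM φ (addM (v (Sum.inr 0)) (numM k)) := by
  induction j with
  | zero => simp [conjShift]
  | succ j ih =>
    rw [conjShift, Formula.realize_inf, ih, realize_substX, realize_addT, realize_numT,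
      realize_xT]
    constructor
    · rintro ⟨h1, h2⟩ k hk
      rcases Nat.lt_succ_iff_lt_or_eq.1 hk with h | h
      · exact h1 k h
      · subst h; exact h2
    · intro h
      exact ⟨fun k hk => h k (by omega), h j (by omega)⟩

end Semantics
/-- If a formula `φ(x)` is `(n+1)`-inductive for some `n ∈ ℕ`, then it is
`<`-inductive. -/
theorem stmt13 (φ : OneVarFormula) (h : ∃ n : ℕ, IsKInductive n φ) :
    IsLtInductive φ := by
  obtain ⟨n, h⟩ := h
  intro N v xs
  have hN := h.realize_sentence N
  have hN' := ((realize_closeAll _ _).1 hN) (fun i : Fin 0 => i.elim0)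
  rw [Formula.realize_inf, realize_conjNum, realize_allX] at hN'
  obtain ⟨base, step⟩ := hN'
  -- simplify step
  have step' : ∀ a : N, (∀ k, k < n + 1 → PM φ (addM a (numM k))) →
      PM φ (addM a (numM (n + 1))) := by
    intro a ha
    have := step a
    rw [Formula.realize_imp, realize_conjShift, realize_substX, realize_addT, realize_numT,
      realize_xT] at this
    exact this ha
  -- goal
  suffices hgoal : Formula.Realize (closeAll (allX (allLtX φ ⟹ φ))) v by
    rw [Formula.Realize] at hgoal
    have hxs : xs = default := funext fun i => i.elim0
    rw [hxs]
    exact hgoal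
  rw [realize_closeAll]
  intro i
  rw [realize_allX]
  intro a
  rw [Formula.realize_imp, realize_allLtX]
  intro ha
  simp only [val1, Sum.elim_inr] at ha
  -- main argument
  rcases decompose n a with ⟨j, hj, rfl⟩ | ⟨z, rfl⟩
  · exact base j hj
  · show PM φ (addM z (numM (n + 1)))
    apply step' z
    intro k hk
    apply ha
    exact ltM_add_left z (numM_lt_numM hk)
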